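/- The characteristic distribution of the hypersurface-with-boundary P₂ = ψ₂(B²(1/√2) × S¹) ⊂ (ℂ², ω₀) is spanned by the vector field ∂φ (the tangent to the S¹-factor): ω₀(∂φ, v) = 0 for all v tangent to P₂, and any tangent vector w to P₂ with ω₀(w, v) = 0 for all v ∈ TP₂ is a multiple of ∂φ. -/

import Mathlib

open Complex Real

/-- The standard symplectic form `ω₀` on `ℂ²`. -/
noncomputable def omega0 (u v : ℂ × ℂ) : ℝ :=
  ((starRingEnd ℂ) u.1 * v.1).im + ((starRingEnd ℂ) u.2 * v.2).im

/-- The probe parametrization `ψ₂(w, c) = (√(1 − 2|w|²)·c, w·c²)`, whose image is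
the hypersurface-with-boundary `P₂ ⊂ (ℂ², ω₀)`. -/
noncomputable def probeMap2 (p : ℂ × ℂ) : ℂ × ℂ :=
  (((Real.sqrt (1 - 2 * ‖p.1‖ ^ 2) : ℝ) : ℂ) * p.2, p.1 * p.2 ^ 2)

lemma abs_sq_eq (z : ℂ) : ‖z‖^2 = z.re^2 + z.im^2 := by
  rw [Complex.sq_norm, Complex.normSq_apply]; ring

lemma probe_eq : probeMap2 = fun p : ℂ × ℂ =>
    (((Real.sqrt (1 - 2 * (p.1.re^2 + p.1.im^2)) : ℝ) : ℂ) * p.2, p.1 * p.2 ^ 2) := by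
  funext p; unfold probeMap2; rw [abs_sq_eq]

lemma probe_diff (w c : ℂ) (hw : 2 * ‖w‖ ^ 2 < 1) :
    DifferentiableAt ℝ probeMap2 (w, c) := by
  rw [probe_eq]
  have h0 : (1 : ℝ) - 2 * (w.re^2 + w.im^2) ≠ 0 := by
    have := abs_sq_eq w; nlinarith
  have dre : DifferentiableAt ℝ (fun p : ℂ × ℂ => p.1.re) (w, c) :=
    Complex.reCLM.differentiableAt.comp _ differentiableAt_fst
  have dim : DifferentiableAt ℝ (fun p : ℂ × ℂ => p.1.im) (w, c) :=
    Complex.imCLM.differentiableAt.comp _ differentiableAt_fst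
  apply DifferentiableAt.prodMk
  · apply DifferentiableAt.mul
    · apply Complex.ofRealCLM.differentiableAt.comp
      exact DifferentiableAt.sqrt ((differentiableAt_const _).sub
        (((dre.pow 2).add (dim.pow 2)).const_mul 2)) h0
    · exact differentiableAt_snd
  · exact differentiableAt_fst.mul (differentiableAt_snd.pow 2)

lemma probe_dir (w c : ℂ) (hw : 2 * ‖w‖ ^ 2 < 1) (v u : ℂ) :
    fderiv ℝ probeMap2 (w, c) (v, u) =
      ( (((-2 * (w.re * v.re + w.im * v.im) / Real.sqrt (1 - 2 * ‖w‖^2) : ℝ)) : ℂ) * c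
          + ((Real.sqrt (1 - 2 * ‖w‖^2) : ℝ) : ℂ) * u,
        v * c ^ 2 + 2 * w * c * u ) := by
  have h0 : (0:ℝ) < 1 - 2 * (w.re^2 + w.im^2) := by
    have := abs_sq_eq w; nlinarith
  set γ : ℝ → ℂ × ℂ := fun t => (w + (t:ℂ) * v, c + (t:ℂ) * u) with hγdef
  have hγ1 : HasDerivAt (fun t : ℝ => w + (t:ℂ) * v) v 0 := by
    have := (Complex.ofRealCLM.hasDerivAt (x := (0:ℝ))).mul_const v |>.const_add w
    refine this.congr_deriv ?_; simp
  have hγ2 : HasDerivAt (fun t : ℝ => c + (t:ℂ) * u) u 0 := by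
    have := (Complex.ofRealCLM.hasDerivAt (x := (0:ℝ))).mul_const u |>.const_add c
    refine this.congr_deriv ?_; simp
  have hγ : HasDerivAt γ (v, u) 0 := hγ1.prodMk hγ2
  have hγ0 : γ 0 = (w, c) := by simp [hγdef]
  have hF : HasFDerivAt probeMap2 (fderiv ℝ probeMap2 (w, c)) (γ 0) := by
    rw [hγ0]; exact (probe_diff w c hw).hasFDerivAt
  have hline : HasDerivAt (fun t => probeMap2 (γ t)) (fderiv ℝ probeMap2 (w, c) (v, u)) 0 :=
    hF.comp_hasDerivAt 0 hγ
  set s : ℝ := Real.sqrt (1 - 2 * ‖w‖^2) with hsdef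
  have hs' : s = Real.sqrt (1 - 2 * (w.re^2 + w.im^2)) := by rw [hsdef, abs_sq_eq]
  have hq : HasDerivAt (fun t : ℝ => 1 - 2 * ((w.re + t * v.re)^2 + (w.im + t * v.im)^2))
      (-4 * (w.re * v.re + w.im * v.im)) 0 := by
    have h1 : HasDerivAt (fun t : ℝ => w.re + t * v.re) v.re 0 := by
      have := ((hasDerivAt_id (0:ℝ)).mul_const v.re).const_add w.re
      refine this.congr_deriv ?_; ring
    have h2 : HasDerivAt (fun t : ℝ => w.im + t * v.im) v.im 0 := by
      have := ((hasDerivAt_id (0:ℝ)).mul_const v.im).const_add w.im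
      refine this.congr_deriv ?_; ring
    have := (((h1.pow 2).add (h2.pow 2)).const_mul 2).const_sub 1
    refine this.congr_deriv ?_; push_cast; ring
  have hq0 : (1:ℝ) - 2 * ((w.re + 0 * v.re)^2 + (w.im + 0 * v.im)^2) ≠ 0 := by
    rw [zero_mul, add_zero, zero_mul, add_zero]; exact ne_of_gt h0
  have hsq : HasDerivAt
      (fun t : ℝ => Real.sqrt (1 - 2 * ((w.re + t * v.re)^2 + (w.im + t * v.im)^2)))
      (-2 * (w.re * v.re + w.im * v.im) / s) 0 := by
    have := (Real.hasDerivAt_sqrt hq0).comp 0 hq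
    refine this.congr_deriv ?_
    rw [zero_mul, add_zero, zero_mul, add_zero] at *
    rw [hs']
    field_simp
    ring
  have hsqC : HasDerivAt (fun t : ℝ =>
      ((Real.sqrt (1 - 2 * ((w.re + t * v.re)^2 + (w.im + t * v.im)^2)) : ℝ) : ℂ))
      (((-2 * (w.re * v.re + w.im * v.im) / s : ℝ)) : ℂ) 0 :=
    Complex.ofRealCLM.hasFDerivAt.comp_hasDerivAt 0 hsq
  have hcomp1 : HasDerivAt (fun t : ℝ =>
      ((Real.sqrt (1 - 2 * ((w.re + t * v.re)^2 + (w.im + t * v.im)^2)) : ℝ) : ℂ)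
        * (c + (t:ℂ) * u))
      ((((-2 * (w.re * v.re + w.im * v.im) / s : ℝ)) : ℂ) * c + ((s:ℝ):ℂ) * u) 0 := by
    have := hsqC.mul hγ2
    refine this.congr_deriv ?_
    norm_num [hs']
  have hcomp2 : HasDerivAt (fun t : ℝ => (w + (t:ℂ) * v) * (c + (t:ℂ) * u)^2)
      (v * c^2 + 2 * w * c * u) 0 := by
    have h2 : HasDerivAt (fun t : ℝ => (c + (t:ℂ) * u)^2) (2 * c * u) 0 := by
      have := hγ2.mul hγ2
      have h' : HasDerivAt (fun t : ℝ => (c + (t:ℂ) * u) * (c + (t:ℂ) * u)) (2*c*u) 0 := by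
        refine this.congr_deriv ?_
        push_cast; ring
      simpa [pow_two] using h'
    have := hγ1.mul h2
    refine this.congr_deriv ?_
    push_cast; ring
  have hexp : HasDerivAt (fun t => probeMap2 (γ t))
      ((((-2 * (w.re * v.re + w.im * v.im) / s : ℝ)) : ℂ) * c + ((s:ℝ):ℂ) * u,
        v * c^2 + 2 * w * c * u) 0 := by
    have heq : (fun t => probeMap2 (γ t)) = fun t : ℝ =>
        (((Real.sqrt (1 - 2 * ((w.re + t * v.re)^2 + (w.im + t * v.im)^2)) : ℝ) : ℂ)
            * (c + (t:ℂ) * u),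
          (w + (t:ℂ) * v) * (c + (t:ℂ) * u)^2) := by
      funext t
      rw [probe_eq, hγdef]
      simp [Complex.add_re, Complex.add_im, Complex.ofReal_mul]
    rw [heq]
    exact hcomp1.prodMk hcomp2
  exact hline.unique hexp

/-- The characteristic distribution of `P₂ = ψ₂(B²(1/√2) × S¹)` is spanned by the
vector field `∂φ` (the image of the tangent `(0, ic)` to the `S¹`-factor):
`ω₀(∂φ, v) = 0` for every vector `v` tangent to `P₂`, and conversely any tangent
vector `w` of `P₂` which is `ω₀`-orthogonal to all of `TP₂` is a multiple of `∂φ`. -/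
theorem probe_characteristic_distribution (w c : ℂ)
    (hw : 2 * ‖w‖ ^ 2 < 1) (hc : ‖c‖ = 1) :
    (∀ (v : ℂ) (t : ℝ),
      omega0 (fderiv ℝ probeMap2 (w, c) (0, I * c))
             (fderiv ℝ probeMap2 (w, c) (v, (t : ℂ) * (I * c))) = 0) ∧
    (∀ (u : ℂ) (t : ℝ),
      (∀ (v : ℂ) (t' : ℝ),
        omega0 (fderiv ℝ probeMap2 (w, c) (u, (t : ℂ) * (I * c)))
               (fderiv ℝ probeMap2 (w, c) (v, (t' : ℂ) * (I * c))) = 0) →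
      ∃ a : ℝ, fderiv ℝ probeMap2 (w, c) (u, (t : ℂ) * (I * c))
        = a • fderiv ℝ probeMap2 (w, c) (0, I * c)) := by
  constructor
  ·
    have hN : c.re^2 + c.im^2 = 1 := by
      have := abs_sq_eq c; rw [hc] at this; nlinarith
    have hs0 : (0:ℝ) < Real.sqrt (1 - 2 * ‖w‖^2) := by
      apply Real.sqrt_pos.2; nlinarith
    intro v t
    rw [probe_dir w c hw, probe_dir w c hw]
    set s : ℝ := Real.sqrt (1 - 2 * ‖w‖^2) with hsdef
    set A : ℝ := -2 * (w.re * v.re + w.im * v.im) / s with hAdef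
    have hsa : s * A = -2 * (w.re * v.re + w.im * v.im) := by
      rw [hAdef]; field_simp
    simp only [omega0, pow_two, Complex.mul_im, Complex.mul_re, Complex.conj_re, Complex.conj_im,
      Complex.add_re, Complex.add_im, Complex.ofReal_re, Complex.ofReal_im,
      Complex.I_re, Complex.I_im, Complex.zero_re, Complex.zero_im,
      Complex.re_ofNat, Complex.im_ofNat]
    linear_combination (-(c.re*c.re+c.im*c.im)) * hsa
      + (-2*(w.re*v.re+w.im*v.im)*(c.re*c.re+c.im*c.im)) * hN
  ·
    have hN : c.re^2 + c.im^2 = 1 := by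
      have := abs_sq_eq c; rw [hc] at this; nlinarith
    have hs0 : (0:ℝ) < Real.sqrt (1 - 2 * ‖w‖^2) := by
      apply Real.sqrt_pos.2; nlinarith
    intro u t h
    have h' := h (I * u) 0
    rw [probe_dir w c hw, probe_dir w c hw] at h'
    set s : ℝ := Real.sqrt (1 - 2 * ‖w‖^2) with hsdef
    have hu0 : u = 0 := by
      have hsa' : s * (-2 * (w.re * (-u.im) + w.im * u.re) / s)
          = -2 * (w.im * u.re - w.re * u.im) := by
        field_simp; ring
      have hu2 : u.re^2 + u.im^2 = 0 := by
        simp only [omega0, pow_two, Complex.mul_im, Complex.mul_re, Complex.conj_re,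
          Complex.conj_im, Complex.add_re, Complex.add_im, Complex.ofReal_re, Complex.ofReal_im,
          Complex.I_re, Complex.I_im, Complex.zero_re, Complex.zero_im,
          Complex.re_ofNat, Complex.im_ofNat] at h'
        linear_combination h' + ((c.re*c.re+c.im*c.im)*t) * hsa'
          + (2*(c.re*c.re+c.im*c.im)*t*(w.im*u.re - w.re*u.im)
              - ((c.re*c.re+c.im*c.im)+1)*(u.re^2+u.im^2)) * hN
      apply Complex.ext <;> simp <;> nlinarith
    refine ⟨t, ?_⟩
    rw [hu0, probe_dir w c hw, probe_dir w c hw]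
    rw [Prod.smul_def]
    refine Prod.ext ?_ ?_ <;> simp [Complex.real_smul] <;> ring
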